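/- For all φ, χ ∈ S(ℝⁿ) and all (x, y) ∈ ℝ²ⁿ, one has (πi)^{-n} ∫_{ℝ²ⁿ} e^{i W_B(x,y;x',y')} φ(x') χ(y') dx' dy' = (2π)^{n/2} i^{-n} · W(φ, conj(χ̂))(x, y), where W_B(x,y;x',y') = −2(y·x' + x·y') + x'·y' + 2 x·y, χ̂ is the Fourier transform of χ, and conj denotes complex conjugation. (This identifies the intertwining operator for Bopp pseudo-differential operators with the cross-Wigner transform.) -/

import Mathlib

open MeasureTheory Complex
open scoped ComplexConjugate Real

noncomputable section

/-- Euclidean dot product on `ℝⁿ`. -/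
def dotR {n : ℕ} (a b : Fin n → ℝ) : ℝ := ∑ i, a i * b i

/-- The cross-Wigner transform on `ℝⁿ`:
`W(φ,ψ)(x,ξ) = (2π)^{-n} ∫ e^{-iξ·t} φ(x+t/2) conj(ψ(x−t/2)) dt`. -/
def crossWignerN {n : ℕ} (φ ψ : (Fin n → ℝ) → ℂ) (x ξ : Fin n → ℝ) : ℂ :=
  ((((2 * π) ^ n)⁻¹ : ℝ) : ℂ) *
    ∫ t : Fin n → ℝ, Complex.exp (-(Complex.I * (dotR ξ t : ℝ))) *
      φ (x + (2⁻¹ : ℝ) • t) * conj (ψ (x - (2⁻¹ : ℝ) • t))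

/-- The Fourier transform `χ̂(ξ) = (2π)^{-n/2} ∫ e^{-iξ·t} χ(t) dt` on `ℝⁿ`. -/
def fourierN {n : ℕ} (χ : (Fin n → ℝ) → ℂ) (ξ : Fin n → ℝ) : ℂ :=
  (((Real.sqrt ((2 * π) ^ n))⁻¹ : ℝ) : ℂ) *
    ∫ t : Fin n → ℝ, Complex.exp (-(Complex.I * (dotR ξ t : ℝ))) * χ t

/-- The generating quadratic form for the Bopp intertwiner:
`W_B(x,y;x',y') = −2(y·x' + x·y') + x'·y' + 2x·y`. -/
def WBopp {n : ℕ} (x y x' y' : Fin n → ℝ) : ℝ :=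
  -2 * (dotR y x' + dotR x y') + dotR x' y' + 2 * dotR x y

lemma dotR_comm {n : ℕ} (a b : Fin n → ℝ) : dotR a b = dotR b a := by
  simp [dotR, mul_comm]

lemma dotR_smul_right {n : ℕ} (a b : Fin n → ℝ) (c : ℝ) :
    dotR a (c • b) = c * dotR a b := by
  simp only [dotR, Pi.smul_apply, smul_eq_mul, Finset.mul_sum]
  exact Finset.sum_congr rfl fun i _ => by ring

lemma dotR_sub_right {n : ℕ} (a b c : Fin n → ℝ) :
    dotR a (b - c) = dotR a b - dotR a c := by
  simp [dotR, Pi.sub_apply, mul_sub, Finset.sum_sub_distrib]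

lemma dotR_sub_left {n : ℕ} (a b c : Fin n → ℝ) :
    dotR (a - b) c = dotR a c - dotR b c := by
  simp [dotR, Pi.sub_apply, sub_mul, Finset.sum_sub_distrib]

lemma continuous_dotR_pair {n : ℕ} :
    Continuous fun p : (Fin n → ℝ) × (Fin n → ℝ) => dotR p.1 p.2 := by
  unfold dotR
  exact continuous_finset_sum _ fun i _ =>
    ((continuous_apply i).comp continuous_fst).mul ((continuous_apply i).comp continuous_snd)

/-- For all Schwartz functions `φ, χ` on `ℝⁿ` and `(x,y) ∈ ℝ²ⁿ`,
`(πi)^{-n} ∬ e^{iW_B(x,y;x',y')} φ(x')χ(y') dx'dy' = (2π)^{n/2} i^{-n} W(φ, conj χ̂)(x,y)`: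
the intertwining operator for Bopp pseudo-differential operators is the cross-Wigner
transform. -/
theorem stmt17 (n : ℕ) (hn : 0 < n) (φ χ : SchwartzMap (Fin n → ℝ) ℂ)
    (x y : Fin n → ℝ) :
    (((π : ℂ) * Complex.I) ^ n)⁻¹ *
        ∫ p : (Fin n → ℝ) × (Fin n → ℝ),
          Complex.exp (Complex.I * (WBopp x y p.1 p.2 : ℝ)) * φ p.1 * χ p.2
      = ((Real.sqrt ((2 * π) ^ n) : ℝ) : ℂ) * (Complex.I ^ n)⁻¹ *
          crossWignerN φ (fun t => conj (fourierN χ t)) x y := by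
  have hπ : (π : ℝ) ≠ 0 := Real.pi_ne_zero
  have hSpos : (0:ℝ) < Real.sqrt ((2 * π) ^ n) := Real.sqrt_pos.2 (by positivity)
  have hS : Real.sqrt ((2 * π) ^ n) ≠ 0 := hSpos.ne'
  -- continuity of the integrand on the product space
  have hWcont : Continuous fun p : (Fin n → ℝ) × (Fin n → ℝ) => WBopp x y p.1 p.2 := by
    have hd : Continuous fun p : (Fin n → ℝ) × (Fin n → ℝ) => dotR p.1 p.2 :=
      continuous_dotR_pair
    have h1 : Continuous fun p : (Fin n → ℝ) × (Fin n → ℝ) => dotR y p.1 :=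
      continuous_dotR_pair.comp (continuous_const.prodMk continuous_fst)
    have h2 : Continuous fun p : (Fin n → ℝ) × (Fin n → ℝ) => dotR x p.2 :=
      continuous_dotR_pair.comp (continuous_const.prodMk continuous_snd)
    unfold WBopp
    exact ((continuous_const.mul (h1.add h2)).add hd).add continuous_const
  have hcont : Continuous fun p : (Fin n → ℝ) × (Fin n → ℝ) =>
      Complex.exp (Complex.I * (WBopp x y p.1 p.2 : ℝ)) * φ p.1 * χ p.2 :=
    ((Complex.continuous_exp.comp
        (continuous_const.mul (Complex.continuous_ofReal.comp hWcont))).mul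
      (φ.continuous.comp continuous_fst)).mul (χ.continuous.comp continuous_snd)
  have hInt : Integrable (fun p : (Fin n → ℝ) × (Fin n → ℝ) =>
      Complex.exp (Complex.I * (WBopp x y p.1 p.2 : ℝ)) * φ p.1 * χ p.2)
      (volume.prod volume) := by
    have hg : Integrable (fun p : (Fin n → ℝ) × (Fin n → ℝ) => ‖φ p.1‖ * ‖χ p.2‖)
        (volume.prod volume) := φ.integrable.norm.mul_prod χ.integrable.norm
    refine hg.mono' hcont.aestronglyMeasurable (Filter.Eventually.of_forall fun p => ?_)
    simp [norm_mul, Complex.norm_exp, Complex.mul_re,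
      Complex.I_re, Complex.I_im, Complex.ofReal_re, Complex.ofReal_im]
  -- the double integral as an iterated integral
  have hprod : (∫ p : (Fin n → ℝ) × (Fin n → ℝ),
        Complex.exp (Complex.I * (WBopp x y p.1 p.2 : ℝ)) * φ p.1 * χ p.2)
      = ∫ x', ∫ y', Complex.exp (Complex.I * (WBopp x y x' y' : ℝ)) * φ x' * χ y' := by
    rw [MeasureTheory.Measure.volume_eq_prod, MeasureTheory.integral_prod _ hInt]
  -- the inner function after expanding the Fourier transform
  set G : (Fin n → ℝ) → ℂ := fun t => ∫ s : Fin n → ℝ,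
      Complex.exp (-(Complex.I * (dotR y t : ℝ))) * φ (x + (2⁻¹ : ℝ) • t) *
        (Complex.exp (-(Complex.I * (dotR (x - (2⁻¹ : ℝ) • t) s : ℝ))) * χ s) with hG
  have hint : ∀ t : Fin n → ℝ,
      Complex.exp (-(Complex.I * (dotR y t : ℝ))) * φ (x + (2⁻¹ : ℝ) • t) *
          fourierN χ (x - (2⁻¹ : ℝ) • t)
        = (((Real.sqrt ((2 * π) ^ n))⁻¹ : ℝ) : ℂ) * G t := by
    intro t
    simp only [hG]
    unfold fourierN
    rw [MeasureTheory.integral_const_mul]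
    ring
  have hCW : crossWignerN φ (fun t => conj (fourierN χ t)) x y
      = ((((2 * π) ^ n)⁻¹ : ℝ) : ℂ) * (((Real.sqrt ((2 * π) ^ n))⁻¹ : ℝ) : ℂ) * ∫ t, G t := by
    unfold crossWignerN
    simp only [Complex.conj_conj]
    simp only [hint]
    rw [MeasureTheory.integral_const_mul]
    ring
  -- change of variables t = 2(x' - x)
  have hcv : (∫ t, G t) = ((2:ℝ) ^ n) • ∫ x', G ((2:ℝ) • (x' - x)) := by
    have h1 : (∫ x', G ((2:ℝ) • (x' - x))) = ∫ u, G ((2:ℝ) • u) :=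
      integral_sub_right_eq_self (fun u => G ((2:ℝ) • u)) x
    rw [h1, MeasureTheory.Measure.integral_comp_smul volume G 2, smul_smul,
      Module.finrank_fin_fun, abs_of_pos (by positivity),
      mul_inv_cancel₀ (by positivity), one_smul]
  -- pointwise identification with the Bopp kernel
  have hpt : ∀ x' : Fin n → ℝ, G ((2:ℝ) • (x' - x))
      = ∫ y', Complex.exp (Complex.I * (WBopp x y x' y' : ℝ)) * φ x' * χ y' := by
    intro x'
    have hx : x + (2⁻¹ : ℝ) • ((2:ℝ) • (x' - x)) = x' := by
      rw [smul_smul]; norm_num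
    have hr : ∀ s : Fin n → ℝ, Complex.I * ((WBopp x y x' s : ℝ) : ℂ)
        = -(Complex.I * (dotR y ((2:ℝ) • (x' - x)) : ℝ)) +
          -(Complex.I * (dotR (x - (2⁻¹ : ℝ) • ((2:ℝ) • (x' - x))) s : ℝ)) := by
      intro s
      have hreal : WBopp x y x' s
          = -(dotR y ((2:ℝ) • (x' - x)) +
              dotR (x - (2⁻¹ : ℝ) • ((2:ℝ) • (x' - x))) s) := by
        rw [smul_smul]
        norm_num
        rw [dotR_smul_right, dotR_sub_right, dotR_sub_left, dotR_sub_left, dotR_comm y x]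
        unfold WBopp
        ring
      rw [hreal]
      push_cast
      ring
    simp only [hG]
    congr 1
    funext s
    rw [hx, mul_mul_mul_comm, ← Complex.exp_add, ← hr s, ← mul_assoc]
  -- put everything together
  rw [hprod, hCW, hcv, Complex.real_smul]
  simp only [hpt]
  have hπC : (π : ℂ) ≠ 0 := Complex.ofReal_ne_zero.2 hπ
  have hSC : ((Real.sqrt ((2 * π) ^ n) : ℝ) : ℂ) ≠ 0 := Complex.ofReal_ne_zero.2 hS
  push_cast
  field_simp
  ring
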